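/- For 1 ≤ s ≤ m+1, the reduced Euler characteristic of the order complex of the poset B(m,s) of nonempty subsets of {1,...,m} of cardinality less than s equals (−1)^s·binomial(m−1, s−1). -/

import Mathlib

open Finset

noncomputable def numSurj (a t : ℕ) : ℕ :=
  Nat.card {g : Fin a → Fin t // Function.Surjective g}

lemma numSurj_eq_card (a t : ℕ) : numSurj a t = Fintype.card {g : Fin a → Fin t // Function.Surjective g} :=
  Nat.card_eq_fintype_card

lemma numSurj_zero_succ (t : ℕ) : numSurj 0 (t+1) = 0 := by
  rw [numSurj_eq_card, Fintype.card_eq_zero_iff]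
  constructor
  rintro ⟨g, hg⟩
  obtain ⟨x, -⟩ := hg 0
  exact x.elim0

lemma numSurj_succ_zero (a : ℕ) : numSurj (a+1) 0 = 0 := by
  rw [numSurj_eq_card, Fintype.card_eq_zero_iff]
  constructor
  rintro ⟨g, -⟩
  exact (g 0).elim0

lemma numSurj_one_one : numSurj 1 1 = 1 := by
  rw [numSurj_eq_card, Fintype.card_eq_one_iff]
  refine ⟨⟨fun _ => 0, fun y => ⟨0, (Subsingleton.elim _ _ : (0 : Fin 1) = y)⟩⟩, ?_⟩
  rintro ⟨g, hg⟩
  apply Subtype.ext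
  funext x
  exact Subsingleton.elim _ _

lemma numSurj_eq_zero_of_lt {a t : ℕ} (h : a < t) : numSurj a t = 0 := by
  rw [numSurj_eq_card, Fintype.card_eq_zero_iff]
  constructor
  rintro ⟨g, hg⟩
  have := Fintype.card_le_of_surjective g hg
  simp at this
  omega

/-- General transport of surjection subtypes along a domain equivalence. -/
def surjEquivOfDomEquiv {α β γ : Type*} (e : α ≃ β) :
    {g : α → γ // Function.Surjective g} ≃ {g : β → γ // Function.Surjective g} :=
  Equiv.subtypeEquiv (Equiv.arrowCongr e (Equiv.refl γ)) (by
    intro g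
    constructor
    · intro h
      simpa [Equiv.arrowCongr] using (h.comp e.symm.surjective)
    · intro h
      simpa [Equiv.arrowCongr] using ((Function.Surjective.comp h e.surjective).comp e.symm.surjective).comp e.surjective)

lemma nat_card_surj {α : Type*} [Fintype α] {a t : ℕ} (h : Fintype.card α = a) :
    Nat.card {g : α → Fin t // Function.Surjective g} = numSurj a t := by
  exact Nat.card_congr (surjEquivOfDomEquiv (Fintype.equivFinOfCardEq h))

open Classical in
noncomputable def snocEquiv (a t : ℕ) (v : Fin (t+1)) :
    {g : Fin (a+1) → Fin (t+1) // Function.Surjective g ∧ g (Fin.last a) = v} ≃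
    {g' : Fin a → Fin (t+1) // ∀ u, u ≠ v → ∃ x, g' x = u} := by
  refine ⟨fun g => ⟨g.1 ∘ Fin.castSucc, ?_⟩, fun g' => ⟨Fin.snoc g'.1 v, ?_, ?_⟩, ?_, ?_⟩
  · intro u hu
    obtain ⟨x, hx⟩ := g.2.1 u
    have hxl : x ≠ Fin.last a := by
      rintro rfl
      exact hu (hx ▸ g.2.2.symm ▸ rfl)
    obtain ⟨y, rfl⟩ := Fin.exists_castSucc_eq.mpr hxl
    exact ⟨y, hx⟩
  · intro u
    by_cases hu : u = v
    · exact ⟨Fin.last a, by simp [Fin.snoc_last, hu]⟩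
    · obtain ⟨x, hx⟩ := g'.2 u hu
      exact ⟨Fin.castSucc x, by simp [Fin.snoc_castSucc, hx]⟩
  · simp [Fin.snoc_last]
  · rintro ⟨g, hs, hv⟩
    apply Subtype.ext
    funext x
    refine Fin.lastCases ?_ ?_ x
    · simp [Fin.snoc_last, hv]
    · intro i; simp [Fin.snoc_castSucc]
  · rintro ⟨g', h⟩
    apply Subtype.ext
    funext x
    simp [Fin.snoc_castSucc]

noncomputable def missEquiv (a t : ℕ) (v : Fin (t+1)) :
    {g' : Fin a → Fin (t+1) // (∀ u, u ≠ v → ∃ x, g' x = u) ∧ ¬ ∃ x, g' x = v} ≃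
    {h : Fin a → Fin t // Function.Surjective h} := by
  refine ⟨fun g' => ⟨fun x => (finSuccAboveEquiv v).symm ⟨g'.1 x, fun he => g'.2.2 ⟨x, he⟩⟩, ?_⟩,
    fun h => ⟨fun x => ((finSuccAboveEquiv v) (h.1 x)).1, ?_, ?_⟩, ?_, ?_⟩
  · intro w
    obtain ⟨x, hx⟩ := g'.2.1 ((finSuccAboveEquiv v) w).1 ((finSuccAboveEquiv v) w).2
    exact ⟨x, (Equiv.symm_apply_eq _).mpr (Subtype.ext hx)⟩
  · intro u hu
    obtain ⟨x, hx⟩ := h.2 ((finSuccAboveEquiv v).symm ⟨u, hu⟩)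
    refine ⟨x, ?_⟩
    show ((finSuccAboveEquiv v) (h.1 x) : Fin (t+1)) = u
    rw [hx, Equiv.apply_symm_apply]
  · rintro ⟨x, hx⟩
    exact ((finSuccAboveEquiv v) (h.1 x)).2 hx
  · rintro ⟨g', hg'⟩
    apply Subtype.ext
    funext x
    simp only [Equiv.apply_symm_apply]
  · rintro ⟨h, hh⟩
    apply Subtype.ext
    funext x
    exact (Equiv.symm_apply_eq _).mpr (Subtype.ext rfl)

open Classical in
lemma card_partial (a t : ℕ) (v : Fin (t+1)) :
    Nat.card {g' : Fin a → Fin (t+1) // ∀ u, u ≠ v → ∃ x, g' x = u} =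
      numSurj a (t+1) + numSurj a t := by
  have e1 : Nat.card {g' : Fin a → Fin (t+1) //
      (∀ u, u ≠ v → ∃ x, g' x = u) ∧ ∃ x, g' x = v} = numSurj a (t+1) := by
    have hiff : ∀ g' : Fin a → Fin (t+1),
        ((∀ u, u ≠ v → ∃ x, g' x = u) ∧ ∃ x, g' x = v) ↔ Function.Surjective g' := by
      intro g'
      constructor
      · rintro ⟨h1, h2⟩ u
        by_cases hu : u = v
        · exact hu ▸ h2
        · exact h1 u hu
      · intro h
        exact ⟨fun u _ => h u, h v⟩
    exact Nat.card_congr (Equiv.subtypeEquivRight hiff)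
  have e2 : Nat.card {g' : Fin a → Fin (t+1) //
      (∀ u, u ≠ v → ∃ x, g' x = u) ∧ ¬ ∃ x, g' x = v} = numSurj a t :=
    Nat.card_congr (missEquiv a t v)
  rw [← e1, ← e2, ← Nat.card_sum]
  apply Nat.card_congr
  exact ((Equiv.sumCompl (fun x : {g' : Fin a → Fin (t+1) // ∀ u, u ≠ v → ∃ x, g' x = u} =>
      ∃ y, x.1 y = v)).symm.trans
    (Equiv.sumCongr
      (Equiv.subtypeSubtypeEquivSubtypeInter
        (fun g' : Fin a → Fin (t+1) => ∀ u, u ≠ v → ∃ x, g' x = u)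
        (fun g' => ∃ x, g' x = v))
      (Equiv.subtypeSubtypeEquivSubtypeInter
        (fun g' : Fin a → Fin (t+1) => ∀ u, u ≠ v → ∃ x, g' x = u)
        (fun g' => ¬∃ x, g' x = v))))

noncomputable def lastFiberEquiv (a t : ℕ) :
    {g : Fin (a+1) → Fin (t+1) // Function.Surjective g} ≃
    Σ v : Fin (t+1), {g : Fin (a+1) → Fin (t+1) // Function.Surjective g ∧ g (Fin.last a) = v} := by
  refine ⟨fun g => ⟨g.1 (Fin.last a), g.1, g.2, rfl⟩, fun p => ⟨p.2.1, p.2.2.1⟩, ?_, ?_⟩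
  · rintro ⟨g, hg⟩; rfl
  · rintro ⟨v, g, hs, rfl⟩; rfl

lemma numSurj_succ_succ (a t : ℕ) :
    numSurj (a+1) (t+1) = (t+1) * (numSurj a (t+1) + numSurj a t) := by
  have h1 : numSurj (a+1) (t+1) =
      ∑ v : Fin (t+1), Nat.card {g : Fin (a+1) → Fin (t+1) //
        Function.Surjective g ∧ g (Fin.last a) = v} := by
    rw [numSurj_eq_card, Fintype.card_congr (lastFiberEquiv a t), Fintype.card_sigma]
    simp [Nat.card_eq_fintype_card]
  rw [h1]
  have h2 : ∀ v : Fin (t+1), Nat.card {g : Fin (a+1) → Fin (t+1) //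
      Function.Surjective g ∧ g (Fin.last a) = v} = numSurj a (t+1) + numSurj a t := by
    intro v
    rw [Nat.card_congr (snocEquiv a t v)]
    exact card_partial a t v
  rw [Finset.sum_congr rfl (fun v _ => h2 v), Finset.sum_const, Finset.card_univ,
    Fintype.card_fin, smul_eq_mul]

lemma alt_sum_numSurj : ∀ a : ℕ, 1 ≤ a → ∀ K : ℕ, a ≤ K →
    ∑ k ∈ Finset.range K, (-1:ℤ)^k * numSurj a (k+1) = (-1)^(a+1) := by
  intro a
  induction a with
  | zero => omega
  | succ b ih =>
    intro _ K hK
    rcases Nat.eq_or_lt_of_le (Nat.one_le_iff_ne_zero.mpr (by omega) : 1 ≤ b + 1) with h | hb1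
    · -- b = 0, a = 1
      have hb : b = 0 := by omega
      subst hb
      rw [Finset.sum_eq_single_of_mem 0 (Finset.mem_range.mpr (by omega))]
      · simp [numSurj_one_one]
      · intro k _ hk
        rw [numSurj_eq_zero_of_lt (by omega)]
        simp
    · -- b ≥ 1
      have hb : 1 ≤ b := by omega
      obtain ⟨b', rfl⟩ : ∃ b', b = b' + 1 := ⟨b - 1, by omega⟩
      have inv : ∀ N : ℕ, ∑ k ∈ Finset.range (N+1), (-1:ℤ)^k * numSurj (b'+1+1) (k+1)
          = -∑ k ∈ Finset.range (N+1), (-1:ℤ)^k * numSurj (b'+1) (k+1)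
            + (N+2) * (-1:ℤ)^N * numSurj (b'+1) (N+1) := by
        intro N
        induction N with
        | zero =>
          have h0 := numSurj_succ_succ (b'+1) 0
          have h00 := numSurj_succ_zero b'
          norm_num [h00] at h0
          simp only [zero_add, Finset.sum_range_one, pow_zero, one_mul]
          rw [show b'+1+1 = b'+2 from rfl, h0]
          push_cast
          ring
        | succ N ihN =>
          rw [Finset.sum_range_succ ((fun k => (-1:ℤ)^k * numSurj (b'+1+1) (k+1))) (N+1),
            Finset.sum_range_succ ((fun k => (-1:ℤ)^k * numSurj (b'+1) (k+1))) (N+1), ihN]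
          have hrec := numSurj_succ_succ (b'+1) (N+1)
          push_cast [hrec]
          ring
      obtain ⟨M, rfl⟩ : ∃ M, K = M + 1 := ⟨K - 1, by omega⟩
      have hM : b' + 1 ≤ M + 1 := by omega
      rw [inv M, ih hb (M+1) hM, numSurj_eq_zero_of_lt (show b' + 1 < M + 1 by omega)]
      push_cast
      ring

section ChainEquiv

/-- The poset `B(m,s)` of nonempty subsets of `{1,…,m}` of cardinality `< s`,
ordered by inclusion. -/
def Bposet (m s : ℕ) : Type :=
  {A : Finset (Fin m) // A.Nonempty ∧ A.card < s}

instance (m s : ℕ) : PartialOrder (Bposet m s) :=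
  Subtype.partialOrder _

variable {m s k : ℕ}

/-- `f x` is the first index `i` with `x ∈ c i`, or `last` if there is none. -/
noncomputable def chainToFun (c : Fin (k+1) → Bposet m s) (x : Fin m) : Fin (k+2) :=
  if h : (Finset.univ.filter fun i : Fin (k+1) => x ∈ (c i).1).Nonempty
  then ((Finset.univ.filter fun i : Fin (k+1) => x ∈ (c i).1).min' h).castSucc
  else Fin.last (k+1)

lemma le_val {c d : Bposet m s} (h : c ≤ d) : c.1 ⊆ d.1 := h

lemma chainToFun_le_iff {c : Fin (k+1) → Bposet m s} (hc : Monotone c) (x : Fin m)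
    (i : Fin (k+1)) : chainToFun c x ≤ i.castSucc ↔ x ∈ (c i).1 := by
  constructor
  · intro hle
    rw [chainToFun] at hle
    split_ifs at hle with h
    · have hmin := Finset.min'_mem _ h
      rw [Finset.mem_filter] at hmin
      have hle' : (Finset.univ.filter fun j : Fin (k+1) => x ∈ (c j).1).min' h ≤ i :=
        Fin.castSucc_le_castSucc_iff.mp hle
      exact le_val (hc hle') hmin.2
    · exact absurd hle (Fin.castSucc_lt_last i).not_ge
  · intro hx
    have hmem : i ∈ Finset.univ.filter fun j : Fin (k+1) => x ∈ (c j).1 :=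
      Finset.mem_filter.mpr ⟨Finset.mem_univ _, hx⟩
    have hne : (Finset.univ.filter fun j : Fin (k+1) => x ∈ (c j).1).Nonempty := ⟨i, hmem⟩
    rw [chainToFun, dif_pos hne]
    exact Fin.castSucc_le_castSucc_iff.mpr (Finset.min'_le _ i hmem)

lemma chainToFun_ne_last_iff {c : Fin (k+1) → Bposet m s} (hc : Monotone c) (x : Fin m) :
    chainToFun c x ≠ Fin.last (k+1) ↔ x ∈ (c (Fin.last k)).1 := by
  rw [← chainToFun_le_iff hc]
  constructor
  · intro hne
    have : chainToFun c x < Fin.last (k+1) := lt_of_le_of_ne le_top hne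
    exact Fin.le_castSucc_iff.mpr this
  · intro hle
    exact ne_of_lt (lt_of_le_of_lt hle (Fin.castSucc_lt_last _))

lemma chainToFun_surj {c : Fin (k+1) → Bposet m s} (hc : StrictMono c) (i : Fin (k+1)) :
    ∃ x, chainToFun c x = i.castSucc := by
  induction i using Fin.cases with
  | zero =>
    obtain ⟨x, hx⟩ := (c 0).2.1
    refine ⟨x, le_antisymm ((chainToFun_le_iff hc.monotone x 0).mpr hx) ?_⟩
    simp [Fin.le_def]
  | succ j =>
    have hlt : c j.castSucc < c j.succ := hc (Fin.castSucc_lt_succ : j.castSucc < j.succ)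
    have hss : (c j.castSucc).1 ⊂ (c j.succ).1 := hlt
    obtain ⟨x, hxj, hxnot⟩ := Finset.exists_of_ssubset hss
    refine ⟨x, le_antisymm ((chainToFun_le_iff hc.monotone x j.succ).mpr hxj) ?_⟩
    have hnotle : ¬ chainToFun c x ≤ j.castSucc.castSucc := fun hle =>
      hxnot ((chainToFun_le_iff hc.monotone x j.castSucc).mp hle)
    rw [Fin.le_def] at hnotle ⊢
    simp only [Fin.coe_castSucc, Fin.val_succ] at hnotle ⊢
    omega

/-- inverse construction -/
def funToChain (f : Fin m → Fin (k+2))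
    (hf : (∀ i : Fin (k+1), ∃ x, f x = i.castSucc) ∧
      (Finset.univ.filter fun x => f x ≠ Fin.last (k+1)).card < s)
    (i : Fin (k+1)) : Bposet m s := by
  refine ⟨Finset.univ.filter fun x => f x ≤ i.castSucc, ?_, ?_⟩
  · obtain ⟨x, hx⟩ := hf.1 0
    exact ⟨x, Finset.mem_filter.mpr ⟨Finset.mem_univ _,
      hx ▸ Fin.castSucc_le_castSucc_iff.mpr (Fin.zero_le i)⟩⟩
  · refine lt_of_le_of_lt (Finset.card_le_card ?_) hf.2
    intro x hx
    rw [Finset.mem_filter] at hx ⊢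
    exact ⟨hx.1, ne_of_lt (lt_of_le_of_lt hx.2 (Fin.castSucc_lt_last i))⟩

lemma funToChain_strictMono (f : Fin m → Fin (k+2)) (hf : _) :
    StrictMono (funToChain (m := m) (s := s) (k := k) f hf) := by
  intro i j hij
  have hsub : (funToChain f hf i).1 ⊆ (funToChain f hf j).1 := by
    intro x hx
    rw [funToChain, Finset.mem_filter] at hx ⊢
    exact ⟨hx.1, le_trans hx.2 (Fin.castSucc_le_castSucc_iff.mpr hij.le)⟩
  obtain ⟨x, hx⟩ := hf.1 j
  have hxj : x ∈ (funToChain f hf j).1 := by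
    rw [funToChain, Finset.mem_filter]
    exact ⟨Finset.mem_univ _, le_of_eq hx⟩
  have hxi : x ∉ (funToChain f hf i).1 := by
    rw [funToChain, Finset.mem_filter]
    rintro ⟨-, hle⟩
    rw [hx] at hle
    exact absurd (Fin.castSucc_le_castSucc_iff.mp hle) hij.not_ge
  exact Finset.ssubset_iff_of_subset hsub |>.mpr ⟨x, hxj, hxi⟩ |> fun hss => hss

end ChainEquiv

section ChainEquiv2
variable {m s k : ℕ}

noncomputable def chainEquiv (m s k : ℕ) :
    {c : Fin (k+1) → Bposet m s // StrictMono c} ≃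
    {f : Fin m → Fin (k+2) // (∀ i : Fin (k+1), ∃ x, f x = i.castSucc) ∧
      (Finset.univ.filter fun x => f x ≠ Fin.last (k+1)).card < s} := by
  refine ⟨fun c => ⟨chainToFun c.1, chainToFun_surj c.2, ?_⟩,
    fun f => ⟨funToChain f.1 f.2, funToChain_strictMono f.1 f.2⟩, ?_, ?_⟩
  · have : (Finset.univ.filter fun x => chainToFun c.1 x ≠ Fin.last (k+1))
        = (c.1 (Fin.last k)).1 := by
      ext x
      simp only [Finset.mem_filter, Finset.mem_univ, true_and]
      exact chainToFun_ne_last_iff c.2.monotone x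
    rw [this]
    exact (c.1 (Fin.last k)).2.2
  · rintro ⟨c, hc⟩
    apply Subtype.ext
    funext i
    apply Subtype.ext
    ext x
    show x ∈ Finset.univ.filter (fun x => chainToFun c x ≤ i.castSucc) ↔ _
    rw [Finset.mem_filter]
    simp only [Finset.mem_univ, true_and]
    exact chainToFun_le_iff hc.monotone x i
  · rintro ⟨f, hf⟩
    apply Subtype.ext
    funext x
    show chainToFun (funToChain f hf) x = f x
    by_cases hlast : f x = Fin.last (k+1)
    · rw [chainToFun, dif_neg, hlast]
      rintro ⟨i, hi⟩
      rw [Finset.mem_filter] at hi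
      have : f x ≤ i.castSucc := by
        have := hi.2
        rw [funToChain, Finset.mem_filter] at this
        exact this.2
      rw [hlast] at this
      exact absurd this (Fin.castSucc_lt_last i).not_ge
    · set i0 : Fin (k+1) := (f x).castPred hlast with hi0
      have hfx : f x = i0.castSucc := (Fin.castSucc_castPred (f x) hlast).symm
      have hmem : ∀ i : Fin (k+1), x ∈ (funToChain f hf i).1 ↔ i0 ≤ i := by
        intro i
        rw [funToChain]
        show x ∈ Finset.univ.filter _ ↔ _
        rw [Finset.mem_filter]
        simp only [Finset.mem_univ, true_and]
        rw [hfx, Fin.castSucc_le_castSucc_iff]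
      have hne : (Finset.univ.filter fun i : Fin (k+1) =>
          x ∈ (funToChain f hf i).1).Nonempty :=
        ⟨i0, Finset.mem_filter.mpr ⟨Finset.mem_univ _, (hmem i0).mpr le_rfl⟩⟩
      rw [chainToFun, dif_pos hne, hfx]
      congr 1
      apply le_antisymm
      · exact Finset.min'_le _ i0 (Finset.mem_filter.mpr ⟨Finset.mem_univ _, (hmem i0).mpr le_rfl⟩)
      · have := Finset.min'_mem _ hne
        rw [Finset.mem_filter] at this
        exact (hmem _).mp this.2

noncomputable def fiberEquiv (m s k : ℕ) (A : Finset (Fin m)) (hA : A.card < s) :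
    {f : Fin m → Fin (k+2) //
      ((∀ i : Fin (k+1), ∃ x, f x = i.castSucc) ∧
        (Finset.univ.filter fun x => f x ≠ Fin.last (k+1)).card < s) ∧
      Finset.univ.filter (fun x => f x ≠ Fin.last (k+1)) = A} ≃
    {g : A → Fin (k+1) // Function.Surjective g} := by
  refine ⟨fun f => ⟨fun x => (f.1 x.1).castPred ?_, ?_⟩,
    fun g => ⟨fun x => if h : x ∈ A then (g.1 ⟨x, h⟩).castSucc else Fin.last (k+1), ?_, ?_⟩,
    ?_, ?_⟩
  · have hx : (x : Fin m) ∈ Finset.univ.filter (fun y => f.1 y ≠ Fin.last (k+1)) := by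
      rw [f.2.2]; exact x.2
    exact (Finset.mem_filter.mp hx).2
  · intro i
    obtain ⟨x, hx⟩ := f.2.1.1 i
    have hxne : f.1 x ≠ Fin.last (k+1) := by
      rw [hx]; exact ne_of_lt (Fin.castSucc_lt_last i)
    have hxA : x ∈ A := by
      rw [← f.2.2, Finset.mem_filter]; exact ⟨Finset.mem_univ _, hxne⟩
    refine ⟨⟨x, hxA⟩, ?_⟩
    apply Fin.castSucc_injective
    rw [Fin.castSucc_castPred, hx]
  · constructor
    · intro i
      obtain ⟨⟨x, hx⟩, hgx⟩ := g.2 i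
      refine ⟨x, ?_⟩
      show (if h : x ∈ A then ((g.1 ⟨x, h⟩).castSucc : Fin (k+2)) else Fin.last (k+1)) = i.castSucc
      rw [dif_pos hx, hgx]
    · have heq : (Finset.univ.filter fun x =>
          (if h : x ∈ A then ((g.1 ⟨x, h⟩).castSucc : Fin (k+2)) else Fin.last (k+1)) ≠
            Fin.last (k+1)) = A := by
        ext y
        rw [Finset.mem_filter]
        simp only [Finset.mem_univ, true_and]
        by_cases hy : y ∈ A
        · rw [dif_pos hy]
          simp [hy, ne_of_lt (Fin.castSucc_lt_last _)]
        · rw [dif_neg hy]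
          simp [hy]
      rw [heq]
      exact hA
  · ext y
    rw [Finset.mem_filter]
    simp only [Finset.mem_univ, true_and]
    by_cases hy : y ∈ A
    · rw [dif_pos hy]
      simp [hy, ne_of_lt (Fin.castSucc_lt_last _)]
    · rw [dif_neg hy]
      simp [hy]
  · rintro ⟨f, hf⟩
    apply Subtype.ext
    funext y
    dsimp only
    by_cases hy : y ∈ A
    · rw [dif_pos hy]
      exact Fin.castSucc_castPred _ _
    · rw [dif_neg hy]
      rw [← hf.2, Finset.mem_filter] at hy
      push_neg at hy
      exact (hy (Finset.mem_univ y)).symm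
  · rintro ⟨g, hg⟩
    apply Subtype.ext
    funext x
    dsimp only
    apply Fin.castSucc_injective
    rw [Fin.castSucc_castPred, dif_pos x.2]

end ChainEquiv2

/-- The number of chains of `k+1` elements in `B(m,s)`. -/
noncomputable def chainCount (m s k : ℕ) : ℕ :=
  Nat.card {c : Fin (k + 1) → Bposet m s // StrictMono c}

lemma chainCount_eq (m s k : ℕ) :
    chainCount m s k = ∑ a ∈ Finset.range s, m.choose a * numSurj a (k+1) := by
  classical
  rw [chainCount, Nat.card_congr (chainEquiv m s k), Nat.card_eq_fintype_card,
    Fintype.card_subtype]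
  rw [Finset.card_eq_sum_card_fiberwise
    (f := fun f : Fin m → Fin (k+2) => Finset.univ.filter fun x => f x ≠ Fin.last (k+1))
    (t := (Finset.range s).biUnion fun a => Finset.powersetCard a Finset.univ)
    (by
      intro f hf
      rw [Finset.mem_coe, Finset.mem_filter] at hf
      exact Finset.mem_biUnion.mpr ⟨_, Finset.mem_range.mpr hf.2.2,
        Finset.mem_powersetCard.mpr ⟨Finset.subset_univ _, rfl⟩⟩)]
  rw [Finset.sum_biUnion (by
    intro a ha b hb hab
    apply Finset.disjoint_left.mpr
    intro A hA hB
    exact hab (((Finset.mem_powersetCard.mp hA).2.symm).trans (Finset.mem_powersetCard.mp hB).2))]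
  apply Finset.sum_congr rfl
  intro a ha
  have key : ∀ A ∈ Finset.powersetCard a Finset.univ,
      ((Finset.univ.filter fun f : Fin m → Fin (k+2) =>
        ((∀ i : Fin (k+1), ∃ x, f x = i.castSucc) ∧
          (Finset.univ.filter fun x => f x ≠ Fin.last (k+1)).card < s)).filter
        (fun f => (Finset.univ.filter fun x => f x ≠ Fin.last (k+1)) = A)).card
      = numSurj a (k+1) := by
    intro A hA
    obtain ⟨-, hcard⟩ := Finset.mem_powersetCard.mp hA
    have hAs : A.card < s := by rw [hcard]; exact Finset.mem_range.mp ha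
    rw [Finset.filter_filter, ← Fintype.card_subtype, ← Nat.card_eq_fintype_card,
      Nat.card_congr (fiberEquiv m s k A hAs), nat_card_surj (by rw [Fintype.card_coe, hcard])]
  rw [Finset.sum_congr rfl key, Finset.sum_const, Finset.card_powersetCard, Finset.card_fin,
    smul_eq_mul]

lemma binom_alt (m : ℕ) : ∀ s : ℕ, 1 ≤ s → s ≤ m + 1 →
    ∑ a ∈ Finset.range s, (-1:ℤ)^a * m.choose a = (-1:ℤ)^(s-1) * (m-1).choose (s-1) := by
  intro s
  induction s with
  | zero => omega
  | succ s' ih =>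
    intro _ h2
    rcases Nat.eq_zero_or_pos s' with rfl | hs'
    · simp
    · have hm : 1 ≤ m := by omega
      rw [Finset.sum_range_succ, ih hs' (by omega)]
      obtain ⟨s'', rfl⟩ : ∃ s'', s' = s'' + 1 := ⟨s' - 1, by omega⟩
      obtain ⟨m', rfl⟩ : ∃ m', m = m' + 1 := ⟨m - 1, by omega⟩
      simp only [Nat.add_sub_cancel]
      rw [Nat.choose_succ_succ m' s'']
      push_cast
      ring

/-- for `1 ≤ s ≤ m+1`, the reduced Euler characteristic of `B(m,s)`,
namely `∑_k (−1)^k c_k − 1` where `c_k` is the number of chains of `k+1` elements,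
equals `(−1)^s · binomial(m−1, s−1)`. -/
theorem stmt_12 (m s : ℕ) (h1 : 1 ≤ s) (h2 : s ≤ m + 1) :
    (∑ k ∈ Finset.range (m + s), (-1 : ℤ) ^ k * chainCount m s k) - 1 =
      (-1) ^ s * ((m - 1).choose (s - 1) : ℤ) := by
  have step1 : ∑ k ∈ Finset.range (m + s), (-1 : ℤ) ^ k * chainCount m s k
      = ∑ a ∈ Finset.range s, (m.choose a : ℤ) *
          ∑ k ∈ Finset.range (m + s), (-1:ℤ)^k * numSurj a (k+1) := by
    simp only [chainCount_eq]
    push_cast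
    simp only [Finset.mul_sum]
    rw [Finset.sum_comm]
    apply Finset.sum_congr rfl
    intro a _
    apply Finset.sum_congr rfl
    intro k _
    ring
  have step2 : ∀ a ∈ Finset.range s,
      (m.choose a : ℤ) * ∑ k ∈ Finset.range (m + s), (-1:ℤ)^k * numSurj a (k+1)
      = -((-1:ℤ)^a * m.choose a) + (if a = 0 then (1:ℤ) else 0) := by
    intro a ha
    rcases Nat.eq_zero_or_pos a with rfl | hpos
    · simp [numSurj_zero_succ]
    · rw [alt_sum_numSurj a hpos (m+s) (by have := Finset.mem_range.mp ha; omega)]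
      rw [if_neg (by omega)]
      ring
  rw [step1, Finset.sum_congr rfl step2, Finset.sum_add_distrib]
  rw [Finset.sum_ite_eq' (Finset.range s) 0 (fun _ => (1:ℤ)),
    if_pos (Finset.mem_range.mpr h1)]
  rw [Finset.sum_neg_distrib, binom_alt m s h1 h2]
  obtain ⟨s', rfl⟩ : ∃ s', s = s' + 1 := ⟨s - 1, by omega⟩
  simp only [Nat.add_sub_cancel]
  ring
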